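/- arXiv:math/0312009 — 3 statements merged into one kernel-verified Lean document; each statement's English description precedes it below -/
import Mathlib

section
/- Let u ∈ C²([d,1]) be positive and satisfy the ODE u'' + ((n-1)/r) u' = u^q on (d,1) with boundary conditions u(1)=0, u(d)=k, where n > 2, q > 1, 0 < d < 1, k > 0. Then u(x) ≤ k · (x^(2-n) - 1)/(d^(2-n) - 1) for all x ∈ [d,1]. -/
open Set

theorem stmt0 (n : ℕ) (hn : 2 < n) (q d k : ℝ) (hq : 1 < q)
    (hd0 : 0 < d) (hd1 : d < 1) (hk : 0 < k)
    (u : ℝ → ℝ) (hu : ContDiffOn ℝ 2 u (Icc d 1))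
    (hpos : ∀ x ∈ Ioo d 1, 0 < u x)
    (hode : ∀ r ∈ Ioo d 1,
      deriv (deriv u) r + (((n : ℝ) - 1) / r) * deriv u r = u r ^ q)
    (hb1 : u 1 = 0) (hbd : u d = k) :
    ∀ x ∈ Icc d 1,
      u x ≤ k * (x ^ ((2 : ℝ) - n) - 1) / (d ^ ((2 : ℝ) - n) - 1) := by
  set a : ℝ := (2 : ℝ) - n with ha_def
  set b : ℝ := (n : ℝ) - 1 with hb_def
  have hn3 : (3 : ℝ) ≤ (n : ℝ) := by exact_mod_cast hn
  have ha : a < 0 := by simp [ha_def]; linarith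
  have hb : 0 < b := by simp [hb_def]; linarith
  set D : ℝ := d ^ a - 1 with hD_def
  have hD : 0 < D := by
    have : 1 < d ^ a := Real.one_lt_rpow_iff_of_pos hd0 |>.2 (Or.inr ⟨hd1, ha⟩)
    simpa [hD_def] using this
  set h : ℝ → ℝ := fun x => k * (x ^ a - 1) / D with hh_def
  -- derivative of h
  have hderiv_h : ∀ x : ℝ, 0 < x → HasDerivAt h (k * (a * x ^ (a - 1)) / D) x := by
    intro x hx
    have h1 : HasDerivAt (fun y : ℝ => y ^ a) (a * x ^ (a - 1)) x :=
      Real.hasDerivAt_rpow_const (Or.inl hx.ne')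
    simpa [hh_def] using ((h1.sub_const 1).const_mul k).div_const D
  have hhd : h d = k := by
    simp only [hh_def]
    field_simp
    exact hD_def.symm
  have hh1 : h 1 = 0 := by simp [hh_def]
  -- differentiability of u and deriv u on the interior
  have hudiff : ∀ r ∈ Ioo d 1, DifferentiableAt ℝ u r := fun r hr =>
    (hu.contDiffAt (Icc_mem_nhds hr.1 hr.2)).differentiableAt two_ne_zero
  have hudiff2 : ∀ r ∈ Ioo d 1, DifferentiableAt ℝ (deriv u) r := by
    intro r hr
    have hc : ContDiffAt ℝ 2 u r := hu.contDiffAt (Icc_mem_nhds hr.1 hr.2)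
    have h1 : ContDiffAt ℝ 1 (fderiv ℝ u) r := hc.fderiv_right (by norm_num)
    have h2 : DifferentiableAt ℝ (fun y => fderiv ℝ u y 1) r :=
      (h1.differentiableAt one_ne_zero).clm_apply (differentiableAt_const _)
    exact h2
  -- continuity of h on positive reals
  have hhcont : ContinuousOn h (Icc d 1) := by
    apply ContinuousOn.div_const
    apply ContinuousOn.mul continuousOn_const
    apply ContinuousOn.sub _ continuousOn_const
    exact fun x hx => ((Real.continuousAt_rpow_const x a
      (Or.inl (lt_of_lt_of_le hd0 hx.1).ne')).continuousWithinAt)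
  set w : ℝ → ℝ := fun x => u x - h x with hw_def
  have hwcont : ContinuousOn w (Icc d 1) :=
    (hu.continuousOn.sub hhcont)
  have hwd : w d = 0 := by simp [hw_def, hbd, hhd]
  have hw1 : w 1 = 0 := by simp [hw_def, hb1, hh1]
  -- suffices to show w ≤ 0
  intro x hx
  by_contra hcon
  push_neg at hcon
  have hwx : 0 < w x := by simp [hw_def, hh_def]; linarith [hcon]
  -- maximum of w on Icc d 1
  obtain ⟨c, hcmem, hcmax⟩ := isCompact_Icc.exists_isMaxOn ⟨x, hx⟩ hwcont
  have hwc : 0 < w c := lt_of_lt_of_le hwx (hcmax hx)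
  have hcne_d : c ≠ d := fun hc => by rw [hc, hwd] at hwc; exact lt_irrefl 0 hwc
  have hcne_1 : c ≠ 1 := fun hc => by rw [hc, hw1] at hwc; exact lt_irrefl 0 hwc
  have hcint : c ∈ Ioo d 1 := ⟨lt_of_le_of_ne hcmem.1 (Ne.symm hcne_d),
    lt_of_le_of_ne hcmem.2 hcne_1⟩
  -- deriv w c = 0
  have hwdiff : ∀ r ∈ Ioo d 1, DifferentiableAt ℝ w r := fun r hr =>
    (hudiff r hr).sub (hderiv_h r (hd0.trans hr.1)).differentiableAt
  have hlocmax : IsLocalMax w c := hcmax.isLocalMax (Icc_mem_nhds hcint.1 hcint.2)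
  have hderiv_wc : deriv w c = 0 := hlocmax.deriv_eq_zero
  have hderiv_w : ∀ r ∈ Ioo d 1, deriv w r = deriv u r - k * (a * r ^ (a - 1)) / D := by
    intro r hr
    rw [hw_def]
    rw [deriv_fun_sub (hudiff r hr) (hderiv_h r (hd0.trans hr.1)).differentiableAt,
      (hderiv_h r (hd0.trans hr.1)).deriv]
  have hderiv_uc : deriv u c = k * (a * c ^ (a - 1)) / D := by
    have := hderiv_w c hcint
    rw [hderiv_wc] at this
    linarith
  -- the function g
  set g : ℝ → ℝ := fun r => r ^ b * deriv u r with hg_def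
  have hgderiv : ∀ r ∈ Ioo d 1, HasDerivAt g (r ^ b * u r ^ q) r := by
    intro r hr
    have hr0 : 0 < r := hd0.trans hr.1
    have h1 : HasDerivAt (fun y : ℝ => y ^ b) (b * r ^ (b - 1)) r :=
      Real.hasDerivAt_rpow_const (Or.inl hr0.ne')
    have h2 : HasDerivAt (deriv u) (deriv (deriv u) r) r := (hudiff2 r hr).hasDerivAt
    have h3 := h1.mul h2
    convert h3 using 1
    · rfl
    · rfl
    · rfl
    have hode' := hode r hr
    have hrb1 : r ^ (b - 1) = r ^ b / r := by
      rw [Real.rpow_sub hr0, Real.rpow_one]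
    rw [hrb1, ← hode']
    field_simp
    ring
  have hgmono : StrictMonoOn g (Ioo d 1) := by
    apply strictMonoOn_of_deriv_pos (convex_Ioo d 1)
    · exact fun r hr => ((hgderiv r hr).differentiableAt.continuousAt).continuousWithinAt
    · intro r hr
      rw [interior_Ioo] at hr
      rw [(hgderiv r hr).deriv]
      exact mul_pos (Real.rpow_pos_of_pos (hd0.trans hr.1) b)
        (Real.rpow_pos_of_pos (hpos r hr) q)
  -- key algebra: r ^ b * (k * (a * r ^ (a-1)) / D) = k * a / D for r > 0
  have hkey : ∀ r : ℝ, 0 < r → r ^ b * (k * (a * r ^ (a - 1)) / D) = k * a / D := by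
    intro r hr0
    have : r ^ b * r ^ (a - 1) = 1 := by
      rw [← Real.rpow_add hr0]
      have : b + (a - 1) = 0 := by simp [ha_def, hb_def]; ring
      rw [this, Real.rpow_zero]
    field_simp
    linear_combination (2 - (n : ℝ)) * this
  have hgc : g c = k * a / D := by
    rw [hg_def]
    simp only
    rw [hderiv_uc]
    exact hkey c (hd0.trans hcint.1)
  -- deriv w positive on (c,1)
  have hwpos : ∀ r ∈ Ioo c 1, 0 < deriv w r := by
    intro r hr
    have hrint : r ∈ Ioo d 1 := ⟨hcint.1.trans hr.1, hr.2⟩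
    have hr0 : 0 < r := hd0.trans hrint.1
    have hglt : g c < g r := hgmono hcint hrint hr.1
    rw [hgc] at hglt
    have hrb : 0 < r ^ b := Real.rpow_pos_of_pos hr0 b
    rw [hderiv_w r hrint]
    have h2 : r ^ b * (k * (a * r ^ (a - 1)) / D) = k * a / D := hkey r hr0
    have h3 : r ^ b * deriv u r > r ^ b * (k * (a * r ^ (a - 1)) / D) := by
      rw [h2]; exact hglt
    nlinarith [h3]
  -- w strictly increasing on [c,1]
  have hwmono : StrictMonoOn w (Icc c 1) := by
    apply strictMonoOn_of_deriv_pos (convex_Icc c 1)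
    · exact hwcont.mono (Icc_subset_Icc hcmem.1 le_rfl)
    · intro r hr
      rw [interior_Icc] at hr
      exact hwpos r hr
  have : w c < w 1 := hwmono (left_mem_Icc.2 hcint.2.le) (right_mem_Icc.2 hcint.2.le) hcint.2
  rw [hw1] at this
  linarith
end

section
/- Let n > 2, q > 1, 0 < d < 1, k > 0, and let u ∈ C²([d,1]) be a solution of u'' + ((n-1)/r)u' = u^q on (d,1) with u(1) = 0, u(d) = k, satisfying 0 ≤ u ≤ k. Then u(x) ≥ C₁ x^(2-n) + C₂ x² + C₃ for all x ∈ [d,1], where C₁ = 2C̃₁ - C̃₂, C₂ = (n-2)C̃₁, C₃ = C̃₂ - nC̃₁, with C̃₁ = k^q/(2n(n-2)), C̃₂ = -(k - D₀)/(d^(2-n) - 1), D₀ = C̃₁(2d^(2-n) + (n-2)d² - n). -/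
open Set

theorem stmt6 (n : ℕ) (hn : 2 < n) (q d k : ℝ) (hq : 1 < q)
    (hd0 : 0 < d) (hd1 : d < 1) (hk : 0 < k)
    (u : ℝ → ℝ) (hu : ContDiffOn ℝ 2 u (Icc d 1))
    (hode : ∀ r ∈ Ioo d 1,
      deriv (deriv u) r + (((n : ℝ) - 1) / r) * deriv u r = u r ^ q)
    (hb1 : u 1 = 0) (hbd : u d = k)
    (hbounds : ∀ x ∈ Icc d 1, 0 ≤ u x ∧ u x ≤ k)
    (Ct₁ Ct₂ D₀ C₁ C₂ C₃ : ℝ)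
    (hCt₁ : Ct₁ = k ^ q / (2 * n * ((n : ℝ) - 2)))
    (hD₀ : D₀ = Ct₁ * (2 * d ^ ((2 : ℝ) - n) + ((n : ℝ) - 2) * d ^ 2 - n))
    (hCt₂ : Ct₂ = -(k - D₀) / (d ^ ((2 : ℝ) - n) - 1))
    (hC₁ : C₁ = 2 * Ct₁ - Ct₂)
    (hC₂ : C₂ = ((n : ℝ) - 2) * Ct₁)
    (hC₃ : C₃ = Ct₂ - n * Ct₁) :
    ∀ x ∈ Icc d 1, C₁ * x ^ ((2 : ℝ) - n) + C₂ * x ^ 2 + C₃ ≤ u x := by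
  have hn2 : (2 : ℝ) < (n : ℝ) := by exact_mod_cast hn
  set nr : ℝ := (n : ℝ) with hnr
  set p : ℝ := 2 - nr with hp
  have hp0 : p < 0 := by simp only [hp]; linarith
  have hq0 : 0 ≤ q := by linarith
  -- boundary values of the comparison function
  have hdp : 1 < d ^ p := by
    rw [Real.one_lt_rpow_iff_of_pos hd0]
    right; exact ⟨hd1, hp0⟩
  have hdp0 : d ^ p - 1 ≠ 0 := ne_of_gt (by linarith)
  have hCt₂' : Ct₂ * (d ^ p - 1) = -(k - D₀) := by
    rw [hCt₂]; field_simp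
  have bd : C₁ * d ^ p + C₂ * d ^ 2 + C₃ = k := by
    have h2 : Ct₂ * (d ^ p - 1) = D₀ - k := by linarith [hCt₂']
    rw [hC₁, hC₂, hC₃]
    linear_combination (-1 : ℝ) * hD₀ - h2
  have b1 : C₁ * (1 : ℝ) ^ p + C₂ * (1 : ℝ) ^ 2 + C₃ = 0 := by
    rw [Real.one_rpow, hC₁, hC₂, hC₃]; ring
  have hkq : 2 * nr * C₂ = k ^ q := by
    rw [hC₂, hCt₁]
    have h1 : 2 * nr * (nr - 2) ≠ 0 := ne_of_gt (by nlinarith)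
    rw [show 2 * nr * ((nr - 2) * (k ^ q / (2 * nr * (nr - 2)))) = 2 * nr * (nr - 2) * (k ^ q / (2 * nr * (nr - 2))) by ring]
    rw [mul_div_left_comm, div_self h1, mul_one]
  -- derivative facts for u
  have hu' : ContDiffOn ℝ 2 u (Ioo d 1) := hu.mono Ioo_subset_Icc_self
  have hdu : DifferentiableOn ℝ u (Ioo d 1) := hu'.differentiableOn (by norm_num)
  have hd2 : ContDiffOn ℝ 1 (deriv u) (Ioo d 1) :=
    hu'.deriv_of_isOpen isOpen_Ioo (by norm_num)
  have hdd2 : DifferentiableOn ℝ (deriv u) (Ioo d 1) := hd2.differentiableOn one_ne_zero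
  have hu1 : ∀ r ∈ Ioo d 1, HasDerivAt u (deriv u r) r := fun r hr =>
    ((hdu r hr).differentiableAt (isOpen_Ioo.mem_nhds hr)).hasDerivAt
  have hu2 : ∀ r ∈ Ioo d 1, HasDerivAt (deriv u) (deriv (deriv u) r) r := fun r hr =>
    ((hdd2 r hr).differentiableAt (isOpen_Ioo.mem_nhds hr)).hasDerivAt
  -- the comparison function and difference
  set w : ℝ → ℝ := fun x => u x - (C₁ * x ^ p + C₂ * x ^ 2 + C₃) with hw
  set A : ℝ → ℝ := fun x => deriv u x - (C₁ * p * x ^ (p - 1) + C₂ * (2 * x)) with hA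
  set g : ℝ → ℝ := fun x => x ^ (nr - 1) * A x with hg
  have hwd : w d = 0 := by simp only [hw, hbd]; linarith
  have hw1 : w 1 = 0 := by simp only [hw, hb1]; linarith [b1]
  -- continuity of w on Icc d 1
  have hwc : ContinuousOn w (Icc d 1) := by
    apply (hu.continuousOn).sub
    apply ContinuousOn.add
    apply ContinuousOn.add
    · exact continuousOn_const.mul (fun x hx =>
        (Real.continuousAt_rpow_const x p
          (Or.inl (ne_of_gt (lt_of_lt_of_le hd0 hx.1)))).continuousWithinAt)
    · exact continuousOn_const.mul (continuousOn_pow 2)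
    · exact continuousOn_const
  -- w has derivative A on Ioo d 1
  have hwA : ∀ r ∈ Ioo d 1, HasDerivAt w (A r) r := by
    intro r hr
    have hr0 : (0 : ℝ) < r := lt_trans hd0 hr.1
    have h1 : HasDerivAt (fun x : ℝ => C₁ * x ^ p) (C₁ * (p * r ^ (p - 1))) r :=
      (Real.hasDerivAt_rpow_const (Or.inl hr0.ne')).const_mul C₁
    have h2 : HasDerivAt (fun x : ℝ => C₂ * x ^ 2) (C₂ * (2 * r ^ 1)) r :=
      (hasDerivAt_pow 2 r).const_mul C₂
    have h3 : HasDerivAt (fun x : ℝ => C₁ * x ^ p + C₂ * x ^ 2 + C₃)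
        (C₁ * (p * r ^ (p - 1)) + C₂ * (2 * r ^ 1) + 0) r :=
      (h1.add h2).add (hasDerivAt_const r C₃)
    have h4 := (hu1 r hr).sub h3
    refine h4.congr_deriv ?_
    simp only [hA, pow_one]
    ring
  -- g has nonpositive derivative on Ioo d 1
  have hgD : ∀ r ∈ Ioo d 1,
      HasDerivAt g (r ^ (nr - 1) * (u r ^ q - k ^ q)) r := by
    intro r hr
    have hr0 : (0 : ℝ) < r := lt_trans hd0 hr.1
    have hA' : HasDerivAt A
        (deriv (deriv u) r - (C₁ * p * ((p - 1) * r ^ (p - 1 - 1)) + C₂ * 2)) r := by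
      have h1 : HasDerivAt (fun x : ℝ => C₁ * p * x ^ (p - 1))
          (C₁ * p * ((p - 1) * r ^ (p - 1 - 1))) r :=
        (Real.hasDerivAt_rpow_const (Or.inl hr0.ne')).const_mul (C₁ * p)
      have h2 : HasDerivAt (fun x : ℝ => C₂ * (2 * x)) (C₂ * 2) r := by
        have h := ((hasDerivAt_id r).const_mul (2 : ℝ)).const_mul C₂
        simp only [id] at h
        simpa using h
      exact (hu2 r hr).sub (h1.add h2)
    have hpow : HasDerivAt (fun x : ℝ => x ^ (nr - 1)) ((nr - 1) * r ^ (nr - 1 - 1)) r :=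
      Real.hasDerivAt_rpow_const (Or.inl hr0.ne')
    have hmul := hpow.mul hA'
    refine hmul.congr_deriv ?_
    symm
    -- algebraic identity
    have hode' := hode r hr
    have e1 : r ^ (nr - 1) = r ^ (nr - 2) * r := by
      rw [show nr - 1 = nr - 2 + 1 by ring, Real.rpow_add hr0, Real.rpow_one]
    have e2 : r ^ (nr - 1 - 1) = r ^ (nr - 2) := by
      rw [show nr - 1 - 1 = nr - 2 by ring]
    have e3 : r ^ (p - 1) = r ^ p * r⁻¹ := by
      rw [show p - 1 = p + (-1) by ring, Real.rpow_add hr0, Real.rpow_neg_one]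
    have e4 : r ^ (p - 1 - 1) = r ^ p * r⁻¹ * r⁻¹ := by
      rw [show p - 1 - 1 = p + (-1) + (-1) by ring, Real.rpow_add hr0,
        Real.rpow_add hr0, Real.rpow_neg_one]
    have e5 : r ^ (nr - 2) * r ^ p = 1 := by
      rw [← Real.rpow_add hr0, show nr - 2 + p = 0 by rw [hp]; ring, Real.rpow_zero]
    have hD2 : deriv (deriv u) r = u r ^ q - (nr - 1) / r * deriv u r := by
      rw [← hode']; ring
    simp only [hA]
    rw [hD2, e1, e2, e3, e4, ← hkq]
    field_simp
    linear_combination (2 * nr * C₂ * r * r - C₁ * p * r * (nr - 2 + p) - 2 * nr * C₂ * r ^ 2) * e5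
  -- g is antitone on Ioo d 1
  have hanti : AntitoneOn g (Ioo d 1) := by
    apply antitoneOn_of_deriv_nonpos (convex_Ioo d 1)
    · exact fun r hr => ((hgD r hr).continuousAt).continuousWithinAt
    · intro r hr
      rw [interior_Ioo] at hr
      exact ((hgD r hr).differentiableAt).differentiableWithinAt
    · intro r hr
      rw [interior_Ioo] at hr
      rw [(hgD r hr).deriv]
      have hr0 : (0 : ℝ) < r := lt_trans hd0 hr.1
      have hb := hbounds r (Ioo_subset_Icc_self hr)
      have hle : u r ^ q ≤ k ^ q := Real.rpow_le_rpow hb.1 hb.2 hq0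
      have : (0 : ℝ) ≤ r ^ (nr - 1) := Real.rpow_nonneg hr0.le _
      nlinarith
  -- main argument: w ≥ 0 on Icc d 1
  have hwpos : ∀ x ∈ Icc d 1, 0 ≤ w x := by
    intro x hx
    by_contra hcon
    push_neg at hcon
    have hxd : x ≠ d := by intro h; rw [h, hwd] at hcon; linarith
    have hx1 : x ≠ 1 := by intro h; rw [h, hw1] at hcon; linarith
    have hxo : x ∈ Ioo d 1 := ⟨lt_of_le_of_ne hx.1 (Ne.symm hxd), lt_of_le_of_ne hx.2 hx1⟩
    obtain ⟨ξ₁, hξ₁, hs₁⟩ := exists_hasDerivAt_eq_slope w A hxo.1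
      (hwc.mono (Icc_subset_Icc le_rfl hx.2))
      (fun y hy => hwA y ⟨hy.1, lt_of_lt_of_le hy.2 hx.2⟩)
    obtain ⟨ξ₂, hξ₂, hs₂⟩ := exists_hasDerivAt_eq_slope w A hxo.2
      (hwc.mono (Icc_subset_Icc hx.1 le_rfl))
      (fun y hy => hwA y ⟨lt_of_le_of_lt hx.1 hy.1, hy.2⟩)
    rw [hwd] at hs₁
    rw [hw1] at hs₂
    have hA1 : A ξ₁ < 0 := by
      rw [hs₁]
      apply div_neg_of_neg_of_pos (by linarith) (by linarith [hxo.1])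
    have hA2 : 0 < A ξ₂ := by
      rw [hs₂]
      apply div_pos (by linarith) (by linarith [hxo.2])
    have hξ₁m : ξ₁ ∈ Ioo d 1 := ⟨hξ₁.1, lt_trans hξ₁.2 hxo.2⟩
    have hξ₂m : ξ₂ ∈ Ioo d 1 := ⟨lt_trans hxo.1 hξ₂.1, hξ₂.2⟩
    have hξlt : ξ₁ < ξ₂ := lt_trans hξ₁.2 hξ₂.1
    have hg1 : g ξ₁ < 0 := by
      have : (0 : ℝ) < ξ₁ ^ (nr - 1) :=
        Real.rpow_pos_of_pos (lt_trans hd0 hξ₁m.1) _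
      simp only [hg]
      exact mul_neg_of_pos_of_neg this hA1
    have hg2 : 0 < g ξ₂ := by
      have : (0 : ℝ) < ξ₂ ^ (nr - 1) :=
        Real.rpow_pos_of_pos (lt_trans hd0 hξ₂m.1) _
      simp only [hg]
      exact mul_pos this hA2
    have := hanti hξ₁m hξ₂m hξlt.le
    linarith
  intro x hx
  have := hwpos x hx
  simp only [hw] at this
  linarith
end

section
/- Let n > 2, q > 1, 0 < d < 1, k > 0, and suppose 0 ≤ u ≤ k is a solution of u'' + ((n-1)/r)u' = -u^q on (d,1) with u(1) = 0, u(d) = k. Then u(x) ≤ C'₁ x^(2-n) + C'₂ x² + C'₃, where C'₁, C'₂, C'₃ are the constants obtained from the explicit solution of w'' + ((n-1)/x)w' = -k^q, w(1)=0, w(d)=k; namely C'₁ = 2C̃'₁ - C̃'₂, C'₂ = (n-2)C̃'₁, C'₃ = C̃'₂ - nC̃'₁ with C̃'₁ = -k^q/(2n(n-2)) and C̃'₂ = -(k - D'₀)/(d^(2-n)-1), D'₀ = C̃'₁(2d^(2-n) + (n-2)d² - n). -/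
open Set

theorem stmt9 (n : ℕ) (hn : 2 < n) (q d k : ℝ) (hq : 1 < q)
    (hd0 : 0 < d) (hd1 : d < 1) (hk : 0 < k)
    (u : ℝ → ℝ) (hu : ContDiffOn ℝ 2 u (Icc d 1))
    (hode : ∀ r ∈ Ioo d 1,
      deriv (deriv u) r + (((n : ℝ) - 1) / r) * deriv u r = -(u r ^ q))
    (hb1 : u 1 = 0) (hbd : u d = k)
    (hbounds : ∀ x ∈ Icc d 1, 0 ≤ u x ∧ u x ≤ k)
    (Ct₁ Ct₂ D₀ C₁ C₂ C₃ : ℝ)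
    (hCt₁ : Ct₁ = -(k ^ q) / (2 * n * ((n : ℝ) - 2)))
    (hD₀ : D₀ = Ct₁ * (2 * d ^ ((2 : ℝ) - n) + ((n : ℝ) - 2) * d ^ 2 - n))
    (hCt₂ : Ct₂ = -(k - D₀) / (d ^ ((2 : ℝ) - n) - 1))
    (hC₁ : C₁ = 2 * Ct₁ - Ct₂)
    (hC₂ : C₂ = ((n : ℝ) - 2) * Ct₁)
    (hC₃ : C₃ = Ct₂ - n * Ct₁) :
    ∀ x ∈ Icc d 1, u x ≤ C₁ * x ^ ((2 : ℝ) - n) + C₂ * x ^ 2 + C₃ := by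
  have hm2 : (2:ℝ) < (n:ℝ) := by exact_mod_cast hn
  set m : ℝ := (n : ℝ) with hm
  have hm0 : (0:ℝ) < m := by linarith
  -- the comparison function W and its first and second derivatives
  set W : ℝ → ℝ := fun x => C₁ * x ^ ((2:ℝ) - m) + C₂ * x ^ 2 + C₃ with hWdef
  set W₁ : ℝ → ℝ := fun x => C₁ * (((2:ℝ) - m) * x ^ ((2:ℝ) - m - 1)) + C₂ * (2 * x) with hW₁def
  set W₂ : ℝ → ℝ := fun x =>
      C₁ * (((2:ℝ) - m) * (((2:ℝ) - m - 1) * x ^ ((2:ℝ) - m - 1 - 1))) + C₂ * 2 with hW₂def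
  have hWd : ∀ x : ℝ, 0 < x → HasDerivAt W (W₁ x) x := by
    intro x hx
    have h1 : HasDerivAt (fun y : ℝ => y ^ ((2:ℝ) - m)) (((2:ℝ) - m) * x ^ ((2:ℝ) - m - 1)) x :=
      Real.hasDerivAt_rpow_const (Or.inl hx.ne')
    have h2 : HasDerivAt (fun y : ℝ => y ^ 2) (2 * x) x := by
      simpa using hasDerivAt_pow 2 x
    exact ((h1.const_mul C₁).add (h2.const_mul C₂)).add_const C₃
  have hW₁d : ∀ x : ℝ, 0 < x → HasDerivAt W₁ (W₂ x) x := by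
    intro x hx
    have h1 : HasDerivAt (fun y : ℝ => y ^ ((2:ℝ) - m - 1))
        (((2:ℝ) - m - 1) * x ^ ((2:ℝ) - m - 1 - 1)) x :=
      Real.hasDerivAt_rpow_const (Or.inl hx.ne')
    have h1' : HasDerivAt (fun y : ℝ => C₁ * (((2:ℝ) - m) * y ^ ((2:ℝ) - m - 1)))
        (C₁ * (((2:ℝ) - m) * (((2:ℝ) - m - 1) * x ^ ((2:ℝ) - m - 1 - 1)))) x :=
      (h1.const_mul ((2:ℝ) - m)).const_mul C₁
    have h2 : HasDerivAt (fun y : ℝ => C₂ * (2 * y)) (C₂ * 2) x := by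
      simpa using ((hasDerivAt_id x).const_mul (2:ℝ)).const_mul C₂
    exact h1'.add h2
  -- basic nonvanishing facts
  have h2n : ((2:ℝ) * m * (m - 2)) ≠ 0 := by
    have : (0:ℝ) < m - 2 := by linarith
    positivity
  have hE1 : 1 < d ^ ((2:ℝ) - m) := by
    rw [Real.one_lt_rpow_iff_of_pos hd0]
    right
    exact ⟨hd1, by linarith⟩
  have hE1ne : d ^ ((2:ℝ) - m) - 1 ≠ 0 := by linarith
  -- the linear ODE satisfied by W
  have hWode : ∀ x : ℝ, 0 < x → W₂ x + ((m - 1) / x) * W₁ x = -(k ^ q) := by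
    intro x hx
    have e1 : x ^ ((2:ℝ) - m - 1) = x ^ ((2:ℝ) - m) / x := by
      rw [Real.rpow_sub hx, Real.rpow_one]
    have e2 : x ^ ((2:ℝ) - m - 1 - 1) = x ^ ((2:ℝ) - m) / x ^ 2 := by
      rw [show (2:ℝ) - m - 1 - 1 = (2 - m) - 2 by ring, Real.rpow_sub hx]
      norm_num [Real.rpow_natCast]
    have hC₂' : 2 * m * C₂ = -(k ^ q) := by
      rw [hC₂, hCt₁]
      have hm2ne : m - 2 ≠ 0 := by linarith
      field_simp
    rw [hW₂def, hW₁def]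
    simp only [e1, e2]
    field_simp
    linear_combination x ^ 2 * hC₂'
  -- boundary values of W
  have hW1 : W 1 = 0 := by
    simp only [hWdef, Real.one_rpow, one_pow]
    rw [hC₁, hC₂, hC₃]; ring
  have hWd' : W d = k := by
    simp only [hWdef]
    rw [hC₁, hC₂, hC₃, hCt₂, hD₀]
    field_simp
    ring
  -- regularity of u on the open interval
  have huo : ContDiffOn ℝ 2 u (Ioo d 1) := hu.mono Ioo_subset_Icc_self
  have hdu : ContDiffOn ℝ 1 (deriv u) (Ioo d 1) :=
    huo.deriv_of_isOpen isOpen_Ioo (by norm_num)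
  have huda : ∀ x ∈ Ioo d 1, HasDerivAt u (deriv u x) x := fun x hx =>
    ((huo.differentiableOn (by norm_num)).differentiableAt
      (isOpen_Ioo.mem_nhds hx)).hasDerivAt
  have hduda : ∀ x ∈ Ioo d 1, HasDerivAt (deriv u) (deriv (deriv u) x) x := fun x hx =>
    ((hdu.differentiableOn (by norm_num)).differentiableAt
      (isOpen_Ioo.mem_nhds hx)).hasDerivAt
  -- the auxiliary function h r = r^(n-1) * (W₁ r - u' r)
  set h : ℝ → ℝ := fun r => r ^ (n - 1) * (W₁ r - deriv u r) with hhdef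
  have hhd : ∀ x ∈ Ioo d 1, HasDerivAt h (x ^ (n - 1) * (u x ^ q - k ^ q)) x := by
    intro x hx
    have hx0 : 0 < x := lt_trans hd0 hx.1
    have hp : HasDerivAt (fun r : ℝ => r ^ (n - 1)) ((n - 1 : ℕ) * x ^ (n - 1 - 1)) x := by
      simpa using hasDerivAt_pow (n - 1) x
    have hdiff : HasDerivAt (fun r => W₁ r - deriv u r) (W₂ x - deriv (deriv u) x) x :=
      (hW₁d x hx0).sub (hduda x hx)
    have := hp.mul hdiff
    refine this.congr_deriv ?_
    have hu'' : deriv (deriv u) x = -(u x ^ q) - ((m - 1) / x) * deriv u x := by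
      have := hode x hx; linarith
    have hW₂' : W₂ x = -(k ^ q) - ((m - 1) / x) * W₁ x := by
      have := hWode x hx0; linarith
    have hcast : ((n - 1 : ℕ) : ℝ) = m - 1 := by
      rw [hm]; push_cast [Nat.cast_sub (by omega : 1 ≤ n)]; ring
    have hpow1 : x ^ (n - 1) = x ^ (n - 1 - 1) * x := by
      rw [← pow_succ]; congr 1; omega
    rw [hu'', hW₂', hcast, hpow1]
    field_simp
    ring
  -- h is antitone on (d, 1)
  have hanti : AntitoneOn h (Ioo d 1) := by
    apply antitoneOn_of_deriv_nonpos (convex_Ioo d 1)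
    · exact fun x hx => (hhd x hx).continuousAt.continuousWithinAt
    · rw [interior_Ioo]
      exact fun x hx => (hhd x hx).differentiableAt.differentiableWithinAt
    · rw [interior_Ioo]
      intro x hx
      rw [(hhd x hx).deriv]
      have hx0 : 0 < x := lt_trans hd0 hx.1
      have hb := hbounds x (Ioo_subset_Icc_self hx)
      have : u x ^ q ≤ k ^ q := Real.rpow_le_rpow hb.1 hb.2 (by linarith)
      have hpw : (0:ℝ) ≤ x ^ (n - 1) := le_of_lt (pow_pos hx0 _)
      nlinarith
  -- the difference v = W - u
  set v : ℝ → ℝ := fun x => W x - u x with hvdef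
  have hvc : ContinuousOn v (Icc d 1) := by
    apply ContinuousOn.sub _ hu.continuousOn
    intro x hx
    have hx0 : 0 < x := lt_of_lt_of_le hd0 hx.1
    exact (hWd x hx0).continuousAt.continuousWithinAt
  have hvd : ∀ x ∈ Ioo d 1, HasDerivAt v (W₁ x - deriv u x) x := fun x hx =>
    (hWd x (lt_trans hd0 hx.1)).sub (huda x hx)
  have hvdiff : DifferentiableOn ℝ v (Ioo d 1) := fun x hx =>
    (hvd x hx).differentiableAt.differentiableWithinAt
  have hv1 : v 1 = 0 := by simp [hvdef, hW1, hb1]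
  have hvdd : v d = 0 := by simp [hvdef, hWd', hbd]
  -- main claim: v ≥ 0 on [d, 1]
  have key : ∀ x ∈ Icc d 1, 0 ≤ v x := by
    intro x hx
    by_contra hneg
    push_neg at hneg
    have hxd : x ≠ d := fun he => by rw [he, hvdd] at hneg; linarith
    have hx1 : x ≠ 1 := fun he => by rw [he, hv1] at hneg; linarith
    have hxo : x ∈ Ioo d 1 := ⟨lt_of_le_of_ne hx.1 (Ne.symm hxd), lt_of_le_of_ne hx.2 hx1⟩
    -- MVT on [d, x]
    obtain ⟨a, ha, hsa⟩ := exists_deriv_eq_slope v hxo.1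
      (hvc.mono (Icc_subset_Icc le_rfl hx.2))
      (hvdiff.mono (Ioo_subset_Ioo le_rfl hx.2))
    -- MVT on [x, 1]
    obtain ⟨b, hb, hsb⟩ := exists_deriv_eq_slope v hxo.2
      (hvc.mono (Icc_subset_Icc hx.1 le_rfl))
      (hvdiff.mono (Ioo_subset_Ioo hx.1 le_rfl))
    have haI : a ∈ Ioo d 1 := ⟨ha.1, lt_trans ha.2 hxo.2⟩
    have hbI : b ∈ Ioo d 1 := ⟨lt_trans hxo.1 hb.1, hb.2⟩
    have hva : deriv v a < 0 := by
      rw [hsa, hvdd]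
      apply div_neg_of_neg_of_pos <;> [linarith; linarith [ha.1, hxo.1]]
    have hvb : 0 < deriv v b := by
      rw [hsb, hv1]
      apply div_pos <;> [linarith; linarith [hb.2, hxo.2]]
    have hda : deriv v a = W₁ a - deriv u a := (hvd a haI).deriv
    have hdb : deriv v b = W₁ b - deriv u b := (hvd b hbI).deriv
    have hha : h a < 0 := by
      have he : h a = a ^ (n - 1) * (W₁ a - deriv u a) := rfl
      rw [he, ← hda]
      exact mul_neg_of_pos_of_neg (pow_pos (lt_trans hd0 haI.1) _) hva
    have hhb : 0 < h b := by
      have he : h b = b ^ (n - 1) * (W₁ b - deriv u b) := rfl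
      rw [he, ← hdb]
      exact mul_pos (pow_pos (lt_trans hd0 hbI.1) _) hvb
    have : h b ≤ h a := hanti haI hbI (le_of_lt (lt_trans ha.2 hb.1))
    linarith
  intro x hx
  have := key x hx
  simp only [hvdef, hWdef] at this
  linarith
end
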